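/- Union bound for random hash functions: let Θ be a nonempty finite set, let M' ≥ 2 and N ≥ 2 be integers, let λ ∈ (1/M', 1), and fix any function g : Θ → {1,…,M'}. Let F_1, …, F_{N−1} be independent, uniformly distributed random functions from Θ to {1,…,M'} (i.e., the values F_j(θ) for all j and θ are i.i.d. uniform on {1,…,M'}). Then Pr[ for all j ∈ {1,…,N−1}: |{θ ∈ Θ : F_j(θ) = g(θ)}| ≤ λ|Θ| ] ≥ 1 − (N−1)·2^{−|Θ|(λ log₂ M' − 1)}. -/

import Mathlib

open Finset MeasureTheory ProbabilityTheory
open scoped ENNReal NNReal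

lemma choose_le_two_pow' (n k : ℕ) : n.choose k ≤ 2 ^ n := by
  rcases le_or_gt k n with h | h
  · calc n.choose k ≤ ∑ m ∈ Finset.range (n + 1), n.choose m :=
        Finset.single_le_sum (fun _ _ => Nat.zero_le _)
          (Finset.mem_range.2 (Nat.lt_succ_of_le h))
    _ = 2 ^ n := Nat.sum_range_choose n
  · simp [Nat.choose_eq_zero_of_lt h]

/-- Union bound for random hash functions: fix `g : Θ → [M']` and let
`F_1, …, F_{N-1} : Θ → [M']` be random functions whose values `F_j(θ)` are i.i.d. uniform
on `[M']`.  Then with probability at least `1 - (N-1)·2^{-|Θ|(λ log₂ M' - 1)}`, every `F_j`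
agrees with `g` on at most `λ|Θ|` points. -/
theorem random_hash_union_bound
    {Ω Θ : Type*} [MeasurableSpace Ω] (μ : Measure Ω) [IsProbabilityMeasure μ]
    [Fintype Θ] [Nonempty Θ] [DecidableEq Θ]
    (M' N : ℕ) (hM : 2 ≤ M') (hN : 2 ≤ N)
    (lam : ℝ) (hlam1 : 1 / (M' : ℝ) < lam) (hlam2 : lam < 1)
    (g : Θ → Fin M')
    (F : Fin (N - 1) → Θ → Ω → Fin M')
    (hmeas : ∀ j θ, Measurable (F j θ))
    (hindep : iIndepFun
      (fun (p : Fin (N - 1) × Θ) ω => F p.1 p.2 ω) μ)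
    (hunif : ∀ j θ c, (μ {ω | F j θ ω = c}).toReal = 1 / (M' : ℝ)) :
    1 - ((N : ℝ) - 1) * 2 ^ (-(Fintype.card Θ : ℝ) * (lam * Real.logb 2 M' - 1)) ≤
      (μ {ω | ∀ j, (((univ.filter fun θ => F j θ ω = g θ).card : ℝ)) ≤
        lam * (Fintype.card Θ : ℝ)}).toReal := by
  classical
  set n := Fintype.card Θ with hn
  set k := ⌈lam * (n : ℝ)⌉₊ with hk
  have hM0 : (0 : ℝ) < M' := by positivity
  have hM1 : (1 : ℝ) ≤ M' := by exact_mod_cast Nat.one_le_of_lt hM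
  have hlam0 : 0 < lam := lt_trans (by positivity) hlam1
  have hN1 : (1 : ℝ) ≤ N := by exact_mod_cast Nat.one_le_of_lt hN
  -- the bad events
  set E : Fin (N - 1) → Set Ω := fun j =>
    {ω | lam * (n : ℝ) < ((univ.filter fun θ => F j θ ω = g θ).card : ℝ)} with hE
  -- measurability via the joint map
  have hGmeas : Measurable (fun ω (p : Fin (N - 1) × Θ) => F p.1 p.2 ω) :=
    measurable_pi_lambda _ fun p => hmeas p.1 p.2
  have key : ∀ S : Set ((Fin (N - 1) × Θ) → Fin M'),
      MeasurableSet ((fun ω (p : Fin (N - 1) × Θ) => F p.1 p.2 ω) ⁻¹' S) :=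
    fun S => hGmeas (Set.toFinite S).measurableSet
  have hEmeas : ∀ j, MeasurableSet (E j) := fun j =>
    key {f | lam * (n : ℝ) < ((univ.filter fun θ => f (j, θ) = g θ).card : ℝ)}
  have hUmeas : MeasurableSet (⋃ j, E j) := MeasurableSet.iUnion hEmeas
  -- the target set is the complement of the union of bad events
  have hcompl : {ω | ∀ j, (((univ.filter fun θ => F j θ ω = g θ).card : ℝ)) ≤
      lam * (n : ℝ)} = (⋃ j, E j)ᶜ := by
    ext ω
    simp [hE, Set.mem_iUnion, not_lt]
  -- each elementary event has probability 1/M'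
  have hval : ∀ j θ, μ {ω | F j θ ω = g θ} = ENNReal.ofReal (1 / (M' : ℝ)) := by
    intro j θ
    rw [← hunif j θ (g θ), ENNReal.ofReal_toReal (measure_ne_top μ _)]
  -- probability of agreeing on all of S
  have hA : ∀ (j : Fin (N - 1)) (S : Finset Θ),
      μ (⋂ θ ∈ S, {ω | F j θ ω = g θ}) = ENNReal.ofReal (1 / (M' : ℝ)) ^ S.card := by
    intro j S
    have hinj : Function.Injective (fun θ : Θ => ((j, θ) : Fin (N - 1) × Θ)) := by
      intro a b h
      simpa using congrArg Prod.snd h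
    have h := hindep.measure_inter_preimage_eq_mul (S.image fun θ => (j, θ))
      (sets := fun p => {g p.2}) (fun p _ => measurableSet_singleton _)
    rw [Finset.set_biInter_finset_image, Finset.prod_image (fun a _ b _ h => hinj h)] at h
    refine h.trans ?_
    refine (Finset.prod_congr rfl fun θ _ => ?_).trans (Finset.prod_const _)
    exact hval j θ
  -- bad event contained in a union over subsets of size k
  have hsub : ∀ j, E j ⊆ ⋃ S ∈ (univ.powersetCard k : Finset (Finset Θ)),
      ⋂ θ ∈ S, {ω | F j θ ω = g θ} := by
    intro j ω hω
    set T := univ.filter fun θ => F j θ ω = g θ with hT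
    have hkT : k ≤ T.card := Nat.ceil_le.2 (le_of_lt hω)
    obtain ⟨S, hST, hScard⟩ := Finset.exists_subset_card_eq hkT
    refine Set.mem_iUnion₂.2 ⟨S, Finset.mem_powersetCard.2 ⟨Finset.subset_univ S, hScard⟩, ?_⟩
    simp only [Set.mem_iInter]
    intro θ hθ
    exact (Finset.mem_filter.1 (hST hθ)).2
  -- probability bound for each bad event
  have hEbound : ∀ j, μ (E j) ≤ (n.choose k : ℝ≥0∞) * ENNReal.ofReal (1 / (M' : ℝ)) ^ k := by
    intro j
    calc μ (E j) ≤ μ (⋃ S ∈ (univ.powersetCard k : Finset (Finset Θ)),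
          ⋂ θ ∈ S, {ω | F j θ ω = g θ}) := measure_mono (hsub j)
      _ ≤ ∑ S ∈ (univ.powersetCard k : Finset (Finset Θ)),
          μ (⋂ θ ∈ S, {ω | F j θ ω = g θ}) := measure_biUnion_finset_le _ _
      _ = ∑ S ∈ (univ.powersetCard k : Finset (Finset Θ)),
          ENNReal.ofReal (1 / (M' : ℝ)) ^ k := by
          refine Finset.sum_congr rfl fun S hS => ?_
          rw [hA j S, (Finset.mem_powersetCard.1 hS).2]
      _ = (n.choose k : ℝ≥0∞) * ENNReal.ofReal (1 / (M' : ℝ)) ^ k := by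
          rw [Finset.sum_const, nsmul_eq_mul]
          congr 1
          rw [Finset.card_powersetCard, Finset.card_univ]
  -- the key real inequality
  have hreal : ((N - 1 : ℕ) : ℝ) * ((n.choose k : ℝ) * (1 / (M' : ℝ)) ^ k) ≤
      ((N : ℝ) - 1) * 2 ^ (-(n : ℝ) * (lam * Real.logb 2 M' - 1)) := by
    have hNcast : ((N - 1 : ℕ) : ℝ) = (N : ℝ) - 1 := by
      have : (1 : ℕ) ≤ N := le_trans one_le_two hN
      push_cast [this]
      ring
    rw [hNcast]
    refine mul_le_mul_of_nonneg_left ?_ (by linarith)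
    -- (n.choose k) * (1/M')^k ≤ 2^n * M'^(-(lam*n)) = 2^(-(n)*(lam*logb 2 M' - 1))
    have h1 : ((n.choose k : ℝ)) ≤ (2 : ℝ) ^ (n : ℝ) := by
      rw [Real.rpow_natCast]
      exact_mod_cast choose_le_two_pow' n k
    have h2 : ((1 / (M' : ℝ)) ^ k : ℝ) = (M' : ℝ) ^ (-(k : ℝ)) := by
      rw [Real.rpow_neg (le_of_lt hM0), Real.rpow_natCast]
      rw [one_div, inv_pow]
    have h3 : (M' : ℝ) ^ (-(k : ℝ)) ≤ (M' : ℝ) ^ (-(lam * (n : ℝ))) := by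
      apply Real.rpow_le_rpow_of_exponent_le hM1
      exact neg_le_neg (Nat.le_ceil _)
    have h4 : (M' : ℝ) ^ (-(lam * (n : ℝ))) =
        (2 : ℝ) ^ (Real.logb 2 (M' : ℝ) * (-(lam * (n : ℝ)))) := by
      rw [Real.rpow_mul (by norm_num : (0:ℝ) ≤ 2)]
      rw [Real.rpow_logb (by norm_num) (by norm_num) hM0]
    calc (n.choose k : ℝ) * (1 / (M' : ℝ)) ^ k
        ≤ (2 : ℝ) ^ (n : ℝ) * (M' : ℝ) ^ (-(lam * (n : ℝ))) := by
          rw [h2]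
          exact mul_le_mul h1 h3 (Real.rpow_nonneg (le_of_lt hM0) _)
            (Real.rpow_nonneg (by norm_num) _)
      _ = (2 : ℝ) ^ (-(n : ℝ) * (lam * Real.logb 2 M' - 1)) := by
          rw [h4, ← Real.rpow_add (by norm_num : (0:ℝ) < 2)]
          congr 1
          ring
  -- put everything together in ℝ≥0∞
  set B : ℝ := ((N : ℝ) - 1) * 2 ^ (-(n : ℝ) * (lam * Real.logb 2 M' - 1)) with hB
  have hB0 : 0 ≤ B := by
    apply mul_nonneg (by linarith)
    exact Real.rpow_nonneg (by norm_num) _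
  have hmain : μ (⋃ j, E j) ≤ ENNReal.ofReal B := by
    calc μ (⋃ j, E j) ≤ ∑ j : Fin (N - 1), μ (E j) := measure_iUnion_fintype_le μ E
      _ ≤ ∑ _j : Fin (N - 1), (n.choose k : ℝ≥0∞) * ENNReal.ofReal (1 / (M' : ℝ)) ^ k :=
          Finset.sum_le_sum fun j _ => hEbound j
      _ = ((N - 1 : ℕ) : ℝ≥0∞) * ((n.choose k : ℝ≥0∞) * ENNReal.ofReal (1 / (M' : ℝ)) ^ k) := by
          rw [Finset.sum_const, nsmul_eq_mul, Finset.card_univ, Fintype.card_fin]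
      _ = ENNReal.ofReal (((N - 1 : ℕ) : ℝ) * ((n.choose k : ℝ) * (1 / (M' : ℝ)) ^ k)) := by
          rw [← ENNReal.ofReal_pow (by positivity), ← ENNReal.ofReal_natCast (n.choose k),
            ← ENNReal.ofReal_mul (by positivity), ← ENNReal.ofReal_natCast (N - 1),
            ← ENNReal.ofReal_mul (by positivity)]
      _ ≤ ENNReal.ofReal B := ENNReal.ofReal_le_ofReal hreal
  have htoReal : (μ (⋃ j, E j)).toReal ≤ B :=
    ENNReal.toReal_le_of_le_ofReal hB0 hmain
  rw [hcompl, prob_compl_eq_one_sub hUmeas,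
    ENNReal.toReal_sub_of_le prob_le_one (by norm_num), ENNReal.toReal_one]
  linarith
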